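/- Let n and m be positive integers, set N = n + m, and let (Y_1, …, Y_N) be real random variables whose joint law is exchangeable and which almost surely have pairwise distinct values. For i ∈ {1, …, n} define R_i^c = #{j ∈ {1, …, n} : Y_j ≤ Y_i} (the relative rank among the first n coordinates) and R_i^t = #{j ∈ {1, …, m} : Y_{n+j} ≤ Y_i} (the number of the last m coordinates with value below Y_i). Then for every i ∈ {1, …, n}, every r ∈ {1, …, n} with P(R_i^c = r) > 0, and every k ∈ {0, …, m}, the conditional probability satisfies P(R_i^t = k | R_i^c = r) = binom(r+k-1, k) · binom(N-r-k, m-k) / binom(N, m); that is, conditionally on R_i^c = r, the variable R_i^t follows the Negative Hypergeometric distribution with parameters (N, m, r). -/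

import Mathlib

open MeasureTheory ProbabilityTheory

open Finset

namespace Stmt2Aux

variable {NN : ℕ}

/-- set of indices "below" pivot j (other than j, with value ≤ pivot) -/
noncomputable def blw (y : Fin NN → ℝ) (j : Fin NN) : Finset (Fin NN) :=
  (Finset.univ.erase j).filter (fun l => y l ≤ y j)

lemma mem_blw {y : Fin NN → ℝ} {j l : Fin NN} :
    l ∈ blw y j ↔ l ≠ j ∧ y l ≤ y j := by
  simp [blw]

lemma blw_subset {y : Fin NN → ℝ} {j : Fin NN} : blw y j ⊆ Finset.univ.erase j :=
  Finset.filter_subset _ _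

/-- the event that the below-set of pivot j equals S -/
def Ev (j : Fin NN) (S : Finset (Fin NN)) : Set (Fin NN → ℝ) := {y | blw y j = S}

lemma measurableSet_Ev (j : Fin NN) (S : Finset (Fin NN)) : MeasurableSet (Ev j S) := by
  have h : Ev j S = ⋂ l : Fin NN, {y : Fin NN → ℝ | (l ≠ j ∧ y l ≤ y j) ↔ l ∈ S} := by
    ext y
    simp only [Ev, Set.mem_setOf_eq, Set.mem_iInter, Finset.ext_iff, mem_blw]
  rw [h]
  refine MeasurableSet.iInter fun l => ?_
  have hle : MeasurableSet {y : Fin NN → ℝ | y l ≤ y j} :=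
    measurableSet_le (measurable_pi_apply l) (measurable_pi_apply j)
  by_cases hl : l = j <;> by_cases hS : l ∈ S
  · have : {y : Fin NN → ℝ | (l ≠ j ∧ y l ≤ y j) ↔ l ∈ S} = ∅ := by
      subst hl; ext y; simp [hS]
    rw [this]; exact MeasurableSet.empty
  · have : {y : Fin NN → ℝ | (l ≠ j ∧ y l ≤ y j) ↔ l ∈ S} = Set.univ := by
      subst hl; ext y; simp [hS]
    rw [this]; exact MeasurableSet.univ
  · have : {y : Fin NN → ℝ | (l ≠ j ∧ y l ≤ y j) ↔ l ∈ S} = {y | y l ≤ y j} := by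
      ext y; simp [hl, hS]
    rw [this]; exact hle
  · have : {y : Fin NN → ℝ | (l ≠ j ∧ y l ≤ y j) ↔ l ∈ S} = {y | y l ≤ y j}ᶜ := by
      ext y; simp [hl, hS]
    rw [this]; exact hle.compl

lemma blw_image (y : Fin NN → ℝ) (π : Equiv.Perm (Fin NN)) (j : Fin NN) :
    (blw (y ∘ π) j).image π = blw y (π j) := by
  ext l
  simp only [Finset.mem_image, mem_blw, Function.comp_apply]
  constructor
  · rintro ⟨a, ⟨ha, hle⟩, rfl⟩
    exact ⟨fun he => ha (π.injective he), hle⟩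
  · rintro ⟨hl, hle⟩
    exact ⟨π.symm l, ⟨fun he => hl (by rw [← π.apply_symm_apply l, he]),
      by rwa [π.apply_symm_apply]⟩, π.apply_symm_apply l⟩

lemma preimage_Ev (π : Equiv.Perm (Fin NN)) (j : Fin NN) (S : Finset (Fin NN)) :
    (fun y : Fin NN → ℝ => y ∘ π) ⁻¹' Ev j S = Ev (π j) (S.image π) := by
  ext y
  simp only [Set.mem_preimage, Ev, Set.mem_setOf_eq]
  constructor
  · rintro rfl; exact (blw_image y π j).symm
  · intro h
    apply Finset.image_injective π.injective
    rw [blw_image, h]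


lemma exists_perm_image {α : Type*} [DecidableEq α] [Fintype α] {s t : Finset α}
    (h : s.card = t.card) : ∃ π : Equiv.Perm α, ∀ a ∈ s, π a ∈ t := by
  have hc : (sᶜ : Finset α).card = (tᶜ : Finset α).card := by
    simp [Finset.card_compl, h]
  let e : {x // x ∈ s} ≃ {x // x ∈ t} := Finset.equivOfCardEq h
  let ec : {x // ¬ x ∈ s} ≃ {x // ¬ x ∈ t} :=
    ((Equiv.subtypeEquivRight (fun x => (Finset.mem_compl).symm)).trans
      (Finset.equivOfCardEq hc)).trans
      (Equiv.subtypeEquivRight (fun x => Finset.mem_compl))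
  refine ⟨Equiv.subtypeCongr e ec, fun a ha => ?_⟩
  have : Equiv.subtypeCongr e ec a = (e ⟨a, ha⟩ : α) := by
    simp only [Equiv.subtypeCongr, Equiv.trans_apply,
      Equiv.sumCompl_symm_apply_of_pos ha, Equiv.sumCongr_apply, Sum.map_inl,
      Equiv.sumCompl_apply_inl]
  rw [this]
  exact (e ⟨a, ha⟩).2

lemma swap_mem_of_mem {α : Type*} [DecidableEq α] {u : Finset α} {a b x : α}
    (ha : a ∈ u) (hb : b ∈ u) (hx : x ∈ u) : Equiv.swap a b x ∈ u := by
  rcases eq_or_ne x a with rfl | hxa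
  · rwa [Equiv.swap_apply_left]
  rcases eq_or_ne x b with rfl | hxb
  · rwa [Equiv.swap_apply_right]
  · rwa [Equiv.swap_apply_of_ne_of_ne hxa hxb]

lemma exists_perm_pair {α : Type*} [DecidableEq α] [Fintype α] {j j' : α} {S S' : Finset α}
    (hS : S ⊆ Finset.univ.erase j) (hS' : S' ⊆ Finset.univ.erase j')
    (h : S'.card = S.card) :
    ∃ π : Equiv.Perm α, π j' = j ∧ S'.image π = S := by
  have hjS : j ∉ S := fun hj => (Finset.mem_erase.mp (hS hj)).1 rfl
  have hjS' : j' ∉ S' := fun hj => (Finset.mem_erase.mp (hS' hj)).1 rfl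
  have hcard : (insert j' S').card = (insert j S).card := by
    rw [Finset.card_insert_of_notMem hjS', Finset.card_insert_of_notMem hjS, h]
  obtain ⟨π₀, hπ₀⟩ := exists_perm_image hcard
  refine ⟨π₀.trans (Equiv.swap (π₀ j') j), ?_, ?_⟩
  · simp [Equiv.swap_apply_left]
  · have hsub : S'.image (π₀.trans (Equiv.swap (π₀ j') j)) ⊆ S := by
      intro x hx
      simp only [Finset.mem_image, Equiv.trans_apply] at hx
      obtain ⟨a, haS', rfl⟩ := hx
      have h1 : Equiv.swap (π₀ j') j (π₀ a) ∈ insert j S := by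
        refine swap_mem_of_mem (hπ₀ j' (Finset.mem_insert_self _ _))
          (Finset.mem_insert_self _ _) (hπ₀ a (Finset.mem_insert_of_mem haS'))
      have h2 : Equiv.swap (π₀ j') j (π₀ a) ≠ j := by
        intro he
        rw [Equiv.swap_apply_eq_iff, Equiv.swap_apply_right] at he
        exact hjS' ((π₀.injective he) ▸ haS')
      rcases Finset.mem_insert.mp h1 with h | h
      · exact absurd h h2
      · exact h
    refine Finset.eq_of_subset_of_card_le hsub ?_
    rw [Finset.card_image_of_injective _ (Equiv.injective _), h]


lemma measurable_comp_perm (π : Equiv.Perm (Fin NN)) :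
    Measurable (fun y : Fin NN → ℝ => y ∘ π) :=
  measurable_pi_lambda _ fun i => measurable_pi_apply (π i)

lemma Ev_measure_eq (ν : Measure (Fin NN → ℝ))
    (hinv : ∀ π : Equiv.Perm (Fin NN), Measure.map (fun y => y ∘ π) ν = ν)
    {j j' : Fin NN} {S S' : Finset (Fin NN)} (hS : S ⊆ Finset.univ.erase j)
    (hS' : S' ⊆ Finset.univ.erase j') (h : S'.card = S.card) :
    ν (Ev j' S') = ν (Ev j S) := by
  obtain ⟨π, hj, hSS⟩ := exists_perm_pair hS hS' h
  calc ν (Ev j' S') = (Measure.map (fun y => y ∘ π) ν) (Ev j' S') := by rw [hinv]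
    _ = ν ((fun y : Fin NN → ℝ => y ∘ π) ⁻¹' (Ev j' S')) :=
        Measure.map_apply (measurable_comp_perm π) (measurableSet_Ev _ _)
    _ = ν (Ev (π j') (S'.image π)) := by rw [preimage_Ev]
    _ = ν (Ev j S) := by rw [hj, hSS]

lemma blw_card_injective {y : Fin NN → ℝ} (hy : Function.Injective y) :
    Function.Injective (fun j => (blw y j).card) := by
  have main : ∀ j j' : Fin NN, y j < y j' → (blw y j).card < (blw y j').card := by
    intro j j' hlt
    have hne : j ≠ j' := fun he => absurd (he ▸ hlt) (lt_irrefl _)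
    have hsub : insert j (blw y j) ⊆ blw y j' := by
      intro l hl
      rcases Finset.mem_insert.mp hl with rfl | hl
      · exact mem_blw.mpr ⟨hne, le_of_lt hlt⟩
      · obtain ⟨hlj, hle⟩ := mem_blw.mp hl
        refine mem_blw.mpr ⟨fun hlj' => ?_, hle.trans (le_of_lt hlt)⟩
        subst hlj'
        exact absurd hle (not_le.mpr hlt)
    have h1 : (insert j (blw y j)).card = (blw y j).card + 1 :=
      Finset.card_insert_of_notMem (fun hj => (mem_blw.mp hj).1 rfl)
    have h2 := Finset.card_le_card hsub
    omega
  intro j j' he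
  simp only at he
  by_contra hne
  rcases lt_trichotomy (y j) (y j') with hlt | heq | hlt
  · exact absurd he (Nat.ne_of_lt (main _ _ hlt))
  · exact hne (hy heq)
  · exact absurd he.symm (Nat.ne_of_lt (main _ _ hlt))

lemma exists_blw_card {y : Fin NN → ℝ} (hy : Function.Injective y) {s : ℕ} (hs : s < NN) :
    ∃ j, (blw y j).card = s := by
  haveI : NeZero NN := ⟨by omega⟩
  have hbd : ∀ j : Fin NN, (blw y j).card < NN := fun j => by
    have h1 : (blw y j).card ≤ (Finset.univ.erase j).card := Finset.card_le_card blw_subset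
    have h2 : (Finset.univ.erase j).card = NN - 1 := by
      rw [Finset.card_erase_of_mem (Finset.mem_univ j), Finset.card_univ, Fintype.card_fin]
    omega
  let F : Fin NN → Fin NN := fun j => ⟨(blw y j).card, hbd j⟩
  have hFinj : Function.Injective F := fun a b hab =>
    blw_card_injective hy (congrArg Fin.val hab)
  obtain ⟨j, hj⟩ := Finite.injective_iff_surjective.mp hFinj ⟨s, hs⟩
  exact ⟨j, congrArg Fin.val hj⟩

lemma measurableSet_inj : MeasurableSet {y : Fin NN → ℝ | Function.Injective y} := by
  have h : {y : Fin NN → ℝ | Function.Injective y}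
      = ⋂ (a : Fin NN) (b : Fin NN), {y | a ≠ b → y a ≠ y b} := by
    ext y
    simp only [Set.mem_setOf_eq, Set.mem_iInter]
    exact ⟨fun h a b hab he => hab (h he), fun h a b he => by
      by_contra hab; exact h a b hab he⟩
  rw [h]
  refine MeasurableSet.iInter fun a => MeasurableSet.iInter fun b => ?_
  by_cases hab : a = b
  · have : {y : Fin NN → ℝ | a ≠ b → y a ≠ y b} = Set.univ := by
      ext y; simp [hab]
    rw [this]; exact MeasurableSet.univ
  · have : {y : Fin NN → ℝ | a ≠ b → y a ≠ y b} = {y : Fin NN → ℝ | y a = y b}ᶜ := by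
      ext y; simp [hab]
    rw [this]
    exact (measurableSet_eq_fun (measurable_pi_apply a) (measurable_pi_apply b)).compl

theorem key (ν : Measure (Fin NN → ℝ)) [IsProbabilityMeasure ν]
    (hinv : ∀ π : Equiv.Perm (Fin NN), Measure.map (fun y => y ∘ π) ν = ν)
    (hinj : ∀ᵐ y ∂ν, Function.Injective y)
    {s : ℕ} (hs : s < NN) {j : Fin NN} {S : Finset (Fin NN)}
    (hS : S ⊆ Finset.univ.erase j) (hcard : S.card = s) :
    ((NN : ENNReal) * ((NN - 1).choose s : ℕ)) * ν (Ev j S) = 1 := by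
  classical
  set I : Set (Fin NN → ℝ) := {y | Function.Injective y} with hI
  have hIc : ν Iᶜ = 0 := by
    rw [ae_iff] at hinj
    simpa [hI, Set.compl_setOf] using hinj
  set idx : Finset ((_ : Fin NN) × Finset (Fin NN)) :=
    Finset.univ.sigma (fun j : Fin NN => (Finset.univ.erase j).powersetCard s) with hidx
  have hmemidx : ∀ x ∈ idx, x.2 ⊆ Finset.univ.erase x.1 ∧ x.2.card = s := by
    intro x hx
    rw [hidx, Finset.mem_sigma, Finset.mem_powersetCard] at hx
    exact hx.2
  have hcover : ⋃ x ∈ idx, (Ev x.1 x.2 ∩ I) = I := by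
    apply Set.Subset.antisymm
    · exact Set.iUnion₂_subset fun x _ => Set.inter_subset_right
    · intro y hyI
      obtain ⟨j₀, hj₀⟩ := exists_blw_card hyI hs
      refine Set.mem_iUnion₂.mpr ⟨⟨j₀, blw y j₀⟩, ?_, rfl, hyI⟩
      rw [hidx, Finset.mem_sigma, Finset.mem_powersetCard]
      exact ⟨Finset.mem_univ _, blw_subset, hj₀⟩
  have hdisj : (idx : Set _).PairwiseDisjoint (fun x : (_ : Fin NN) × Finset (Fin NN) =>
      Ev x.1 x.2 ∩ I) := by
    intro x hx x' hx' hne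
    refine Set.disjoint_left.mpr fun {y} hy1 hy2 => hne ?_
    obtain ⟨he1, hyI⟩ := hy1
    obtain ⟨he2, _⟩ := hy2
    have h1 : blw y x.1 = x.2 := he1
    have h2 : blw y x'.1 = x'.2 := he2
    have hcard1 := (hmemidx x hx).2
    have hcard2 := (hmemidx x' hx').2
    have hj : x.1 = x'.1 := by
      apply blw_card_injective hyI
      simp only [h1, h2, hcard1, hcard2]
    refine Sigma.ext hj (heq_of_eq ?_)
    rw [← h1, ← h2, hj]
  have hsum : ∑ x ∈ idx, ν (Ev x.1 x.2 ∩ I) = 1 := by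
    rw [← measure_biUnion_finset hdisj
      (fun x _ => (measurableSet_Ev _ _).inter measurableSet_inj), hcover,
      ← Set.univ_inter I, measure_inter_conull hIc, measure_univ]
  have hval : ∀ x ∈ idx, ν (Ev x.1 x.2 ∩ I) = ν (Ev j S) := by
    intro x hx
    rw [measure_inter_conull hIc]
    exact Ev_measure_eq ν hinv hS (hmemidx x hx).1 (by rw [(hmemidx x hx).2, hcard])
  rw [Finset.sum_congr rfl hval, Finset.sum_const] at hsum
  have hidxcard : idx.card = NN * (NN - 1).choose s := by
    rw [hidx, Finset.card_sigma]
    have : ∀ j : Fin NN, ((Finset.univ.erase j).powersetCard s).card = (NN - 1).choose s := by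
      intro j
      rw [Finset.card_powersetCard, Finset.card_erase_of_mem (Finset.mem_univ j),
        Finset.card_univ, Fintype.card_fin]
    rw [Finset.sum_congr rfl (fun j _ => this j), Finset.sum_const, Finset.card_univ,
      Fintype.card_fin, smul_eq_mul]
  rw [hidxcard] at hsum
  rw [← hsum, nsmul_eq_mul, Nat.cast_mul]


section Decomp

variable {n m : ℕ}

/-- pivot index -/
def ip (m : ℕ) (i : Fin n) : Fin (n + m) := Fin.castAdd m i

/-- calibration indices other than the pivot -/
def calE (m : ℕ) (i : Fin n) : Finset (Fin (n + m)) :=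
  (Finset.univ.image (Fin.castAdd m)).erase (ip m i)

/-- test indices -/
def testS (n m : ℕ) : Finset (Fin (n + m)) := Finset.univ.image (Fin.natAdd n)

lemma mem_castAdd_image {x : Fin (n + m)} :
    x ∈ Finset.univ.image (Fin.castAdd m) ↔ (x : ℕ) < n := by
  simp only [Finset.mem_image, Finset.mem_univ, true_and]
  constructor
  · rintro ⟨j, rfl⟩; simpa using j.isLt
  · intro h; exact ⟨⟨x, h⟩, Fin.ext (by simp)⟩

lemma mem_calE {i : Fin n} {x : Fin (n + m)} :
    x ∈ calE m i ↔ x ≠ ip m i ∧ (x : ℕ) < n := by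
  simp only [calE, Finset.mem_erase, mem_castAdd_image]

lemma mem_testS {x : Fin (n + m)} : x ∈ testS n m ↔ n ≤ (x : ℕ) := by
  simp only [testS, Finset.mem_image, Finset.mem_univ, true_and]
  constructor
  · rintro ⟨j, rfl⟩; simp
  · intro h
    have hx := x.isLt
    exact ⟨⟨(x : ℕ) - n, by omega⟩, Fin.ext (by simp; omega)⟩

lemma ip_val {i : Fin n} : ((ip m i : Fin (n + m)) : ℕ) = (i : ℕ) := rfl

lemma natAdd_inj : Function.Injective (Fin.natAdd n : Fin m → Fin (n + m)) := by
  intro a b h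
  have := congrArg Fin.val h
  simp only [Fin.coe_natAdd] at this
  exact Fin.ext (by omega)

lemma erase_univ_eq (i : Fin n) :
    Finset.univ.erase (ip m i) = calE m i ∪ testS n m := by
  ext x
  simp only [Finset.mem_erase, Finset.mem_univ, and_true, Finset.mem_union, mem_calE, mem_testS]
  constructor
  · intro hx
    rcases lt_or_ge (x : ℕ) n with h | h
    · exact Or.inl ⟨hx, h⟩
    · exact Or.inr h
  · rintro (⟨hx, _⟩ | h)
    · exact hx
    · intro he
      have : ((ip m i : Fin (n + m)) : ℕ) = (i : ℕ) := ip_val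
      rw [he] at h
      have := i.isLt
      omega

lemma disj_calE_testS (i : Fin n) : Disjoint (calE m i) (testS n m) := by
  rw [Finset.disjoint_left]
  intro x hx hx'
  rw [mem_calE] at hx
  rw [mem_testS] at hx'
  omega

lemma calE_subset (i : Fin n) : calE m i ⊆ Finset.univ.erase (ip m i) := by
  rw [erase_univ_eq i]; exact Finset.subset_union_left

lemma testS_subset (i : Fin n) : testS n m ⊆ Finset.univ.erase (ip m i) := by
  rw [erase_univ_eq i]; exact Finset.subset_union_right

lemma card_calE (i : Fin n) : (calE m i).card = n - 1 := by
  rw [calE, Finset.card_erase_of_mem (mem_castAdd_image.mpr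
    (show ((ip m i : Fin (n + m)) : ℕ) < n from by rw [ip_val]; exact i.isLt)),
    Finset.card_image_of_injective _ (Fin.castAdd_injective n m), Finset.card_univ,
    Fintype.card_fin]

lemma card_testS : (testS n m).card = m := by
  rw [testS, Finset.card_image_of_injective _ (natAdd_inj (n := n) (m := m)),
    Finset.card_univ, Fintype.card_fin]

lemma ip_not_mem_calE {i : Fin n} : ip m i ∉ calE m i := fun h => (mem_calE.mp h).1 rfl

lemma Fc_card (y : Fin (n + m) → ℝ) (i : Fin n) :
    (Finset.univ.filter (fun j : Fin n => y (Fin.castAdd m j) ≤ y (ip m i))).card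
      = (blw y (ip m i) ∩ calE m i).card + 1 := by
  have himg : (Finset.univ.filter
        (fun j : Fin n => y (Fin.castAdd m j) ≤ y (ip m i))).image (Fin.castAdd m)
      = insert (ip m i) (blw y (ip m i) ∩ calE m i) := by
    ext x
    simp only [Finset.mem_image, Finset.mem_filter, Finset.mem_univ, true_and,
      Finset.mem_insert, Finset.mem_inter, mem_blw, mem_calE]
    constructor
    · rintro ⟨j, hcond, rfl⟩
      by_cases hj : j = i
      · subst hj; exact Or.inl rfl
      · have hne : Fin.castAdd m j ≠ ip m i := fun he => hj (Fin.castAdd_injective n m he)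
        exact Or.inr ⟨⟨hne, hcond⟩, hne, by simpa using j.isLt⟩
    · rintro (rfl | ⟨⟨hne, hcond⟩, _, hlt⟩)
      · exact ⟨i, le_refl _, rfl⟩
      · refine ⟨⟨(x : ℕ), hlt⟩, ?_, Fin.ext (by simp)⟩
        have : Fin.castAdd m ⟨(x : ℕ), hlt⟩ = x := Fin.ext (by simp)
        rwa [this]
  have hcardi : (Finset.univ.filter
        (fun j : Fin n => y (Fin.castAdd m j) ≤ y (ip m i))).card
      = ((Finset.univ.filter
        (fun j : Fin n => y (Fin.castAdd m j) ≤ y (ip m i))).image (Fin.castAdd m)).card :=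
    (Finset.card_image_of_injective _ (Fin.castAdd_injective n m)).symm
  rw [hcardi, himg, Finset.card_insert_of_notMem
    (fun h => ip_not_mem_calE (Finset.mem_inter.mp h).2)]

lemma Ft_card (y : Fin (n + m) → ℝ) (i : Fin n) :
    (Finset.univ.filter (fun j : Fin m => y (Fin.natAdd n j) ≤ y (ip m i))).card
      = (blw y (ip m i) ∩ testS n m).card := by
  have himg : (Finset.univ.filter
        (fun j : Fin m => y (Fin.natAdd n j) ≤ y (ip m i))).image (Fin.natAdd n)
      = blw y (ip m i) ∩ testS n m := by
    ext x
    simp only [Finset.mem_image, Finset.mem_filter, Finset.mem_univ, true_and,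
      Finset.mem_inter, mem_blw, mem_testS]
    constructor
    · rintro ⟨j, hcond, rfl⟩
      refine ⟨⟨?_, hcond⟩, by simp⟩
      intro he
      have := congrArg Fin.val he
      simp only [Fin.coe_natAdd, ip_val] at this
      have := i.isLt
      omega
    · rintro ⟨⟨hne, hcond⟩, hge⟩
      have hx := x.isLt
      refine ⟨⟨(x : ℕ) - n, by omega⟩, ?_, Fin.ext (by simp; omega)⟩
      have : Fin.natAdd n (⟨(x : ℕ) - n, by omega⟩ : Fin m) = x := Fin.ext (by simp; omega)
      rwa [this]
  rw [← himg, Finset.card_image_of_injective _ (natAdd_inj (n := n) (m := m))]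

lemma Fcn_card (z : Fin n → ℝ) (i : Fin n) :
    (Finset.univ.filter (fun j : Fin n => z j ≤ z i)).card = (blw z i).card + 1 := by
  have h : Finset.univ.filter (fun j : Fin n => z j ≤ z i) = insert i (blw z i) := by
    ext l
    simp only [Finset.mem_filter, Finset.mem_univ, true_and, Finset.mem_insert, mem_blw]
    constructor
    · intro hl
      by_cases hli : l = i
      · exact Or.inl hli
      · exact Or.inr ⟨hli, hl⟩
    · rintro (rfl | ⟨_, hl⟩)
      · exact le_refl _
      · exact hl
  rw [h, Finset.card_insert_of_notMem (fun hj => (mem_blw.mp hj).1 rfl)]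

end Decomp

lemma natid (a b k d : ℕ) :
    (a+b+1) * ((a+b+1-1).choose (a+1-1) * (k+d).choose k) * ((a+b+1+(k+d)).choose (k+d))
      = ((a+1+k-1).choose k * (a+b+1+(k+d)-(a+1)-k).choose (k+d-k))
        * ((a+b+1+(k+d)) * ((a+b+1+(k+d)-1).choose (a+1+k-1))) := by
  have h1 : a+b+1-1 = a+b := by omega
  have h2 : a+1-1 = a := by omega
  have h3 : a+1+k-1 = a+k := by omega
  have h4 : a+b+1+(k+d)-(a+1)-k = b+d := by omega
  have h5 : k+d-k = d := by omega
  have h6 : a+b+1+(k+d) = a+b+(k+d)+1 := by omega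
  rw [h1, h2, h3, h4, h5, h6]
  have hQ : ((a+b+1) * ((a+b).choose a * (k+d).choose k) * ((a+b+(k+d)+1).choose (k+d)) : ℚ)
      = (((a+k).choose k * (b+d).choose d)
        * ((a+b+(k+d)+1) * ((a+b+(k+d)+1-1).choose (a+k))) : ℚ) := by
    have c1 := Nat.cast_choose ℚ (show a ≤ a+b by omega)
    have c2 := Nat.cast_choose ℚ (show k ≤ k+d by omega)
    have c3 := Nat.cast_choose ℚ (show k+d ≤ a+b+(k+d)+1 by omega)
    have c4 := Nat.cast_choose ℚ (show k ≤ a+k by omega)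
    have c5 := Nat.cast_choose ℚ (show d ≤ b+d by omega)
    have c6 := Nat.cast_choose ℚ (show a+k ≤ a+b+(k+d) by omega)
    have e1 : a+b-a = b := by omega
    have e2 : k+d-k = d := by omega
    have e3 : a+b+(k+d)+1-(k+d) = a+b+1 := by omega
    have e4 : a+k-k = a := by omega
    have e5 : b+d-d = b := by omega
    have e6 : a+b+(k+d)-(a+k) = b+d := by omega
    have e7 : a+b+(k+d)+1-1 = a+b+(k+d) := by omega
    rw [e1] at c1; rw [e2] at c2; rw [e3] at c3; rw [e4] at c4; rw [e5] at c5; rw [e6] at c6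
    rw [e7]
    push_cast
    rw [c1, c2, c3, c4, c5, c6]
    have f1 : ((a+b+1).factorial : ℚ) = (a+b+1) * (a+b).factorial := by
      push_cast [Nat.factorial_succ]; ring
    have f2 : ((a+b+(k+d)+1).factorial : ℚ) = (a+b+(k+d)+1) * (a+b+(k+d)).factorial := by
      push_cast [Nat.factorial_succ]; ring
    have hne : ∀ x : ℕ, ((x.factorial : ℚ)) ≠ 0 :=
      fun x => Nat.cast_ne_zero.mpr (Nat.factorial_ne_zero x)
    rw [f1, f2]
    field_simp
  have := hQ
  rw [show ((a+b+(k+d)+1-1) : ℕ) = a+b+(k+d) from by omega] at this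
  exact_mod_cast this

end Stmt2Aux

open Stmt2Aux


/-- For exchangeable a.s.-distinct real random variables `Y_1, …, Y_{n+m}`,
conditionally on the relative rank `R_i^c = r` of a calibration item `i ∈ {1,…,n}`
among the first `n` coordinates, the number `R_i^t` of the last `m` coordinates with
value below `Y_i` follows the Negative Hypergeometric distribution with parameters
`(N, m, r)`, where `N = n + m`. -/
theorem stmt2 (n m : ℕ) (hn : 1 ≤ n) (hm : 1 ≤ m) (N : ℕ) (hN : N = n + m)
    {Ω : Type*} [MeasurableSpace Ω] (μ : Measure Ω) [IsProbabilityMeasure μ]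
    (Y : Ω → Fin (n + m) → ℝ) (hY : Measurable Y)
    (hexch : ∀ π : Equiv.Perm (Fin (n + m)),
      Measure.map (fun ω i => Y ω (π i)) μ = Measure.map Y μ)
    (hdistinct : ∀ᵐ ω ∂μ, ∀ i j : Fin (n + m), i ≠ j → Y ω i ≠ Y ω j)
    (Rc : Ω → Fin n → ℕ)
    (hRc : ∀ ω i, Rc ω i = (Finset.univ.filter
        (fun j : Fin n => Y ω (Fin.castAdd m j) ≤ Y ω (Fin.castAdd m i))).card)
    (Rt : Ω → Fin n → ℕ)
    (hRt : ∀ ω i, Rt ω i = (Finset.univ.filter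
        (fun j : Fin m => Y ω (Fin.natAdd n j) ≤ Y ω (Fin.castAdd m i))).card)
    (i : Fin n) (r : ℕ) (hr1 : 1 ≤ r) (hrn : r ≤ n)
    (hpos : 0 < μ {ω | Rc ω i = r})
    (k : ℕ) (hk : k ≤ m) :
    μ[|{ω | Rc ω i = r}] {ω | Rt ω i = k}
      = ((Nat.choose (r + k - 1) k : ENNReal) * (Nat.choose (N - r - k) (m - k) : ENNReal))
          / (Nat.choose N m : ENNReal) := by
  classical
  subst hN
  -- pushforward measure
  set ν : Measure (Fin (n + m) → ℝ) := μ.map Y with hν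
  haveI : IsProbabilityMeasure ν := Measure.isProbabilityMeasure_map hY.aemeasurable
  have hinv : ∀ π : Equiv.Perm (Fin (n + m)),
      Measure.map (fun y => y ∘ π) ν = ν := by
    intro π
    rw [hν, Measure.map_map (measurable_comp_perm π) hY]
    have he : ((fun y : Fin (n + m) → ℝ => y ∘ π) ∘ Y) = (fun ω i => Y ω (π i)) := rfl
    rw [he, hexch]
  have hinj : ∀ᵐ y ∂ν, Function.Injective y := by
    rw [ae_iff]
    have hc : {y : Fin (n + m) → ℝ | ¬ Function.Injective y}
        = {y : Fin (n + m) → ℝ | Function.Injective y}ᶜ := rfl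
    rw [hc, hν, Measure.map_apply hY measurableSet_inj.compl]
    refine measure_mono_null ?_ (ae_iff.mp hdistinct)
    intro ω hω
    simp only [Set.mem_preimage, Set.mem_compl_iff, Set.mem_setOf_eq] at hω ⊢
    intro hall
    exact hω (fun a b he => by by_contra hab; exact hall a b hab he)
  -- events in path space
  set Ac : Set (Fin (n + m) → ℝ) := {y | (Finset.univ.filter
      (fun j : Fin n => y (Fin.castAdd m j) ≤ y (ip m i))).card = r} with hAcdef
  set At : Set (Fin (n + m) → ℝ) := {y | (Finset.univ.filter
      (fun j : Fin m => y (Fin.natAdd n j) ≤ y (ip m i))).card = k} with hAtdef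
  have hC : {ω | Rc ω i = r} = Y ⁻¹' Ac := by
    ext ω
    rw [Set.mem_setOf_eq, hRc ω i]
    simp only [Set.mem_preimage, hAcdef, Set.mem_setOf_eq]
    exact Iff.rfl
  have hCT : {ω | Rc ω i = r} ∩ {ω | Rt ω i = k} = Y ⁻¹' (Ac ∩ At) := by
    ext ω
    rw [Set.mem_inter_iff, Set.mem_setOf_eq, Set.mem_setOf_eq, hRc ω i, hRt ω i]
    simp only [Set.mem_preimage, Set.mem_inter_iff, hAcdef, hAtdef, Set.mem_setOf_eq]
    exact Iff.rfl
  ---- JOINT EVENT ----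
  set P : Finset (Finset (Fin (n + m)) × Finset (Fin (n + m))) :=
    (calE m i).powersetCard (r - 1) ×ˢ (testS n m).powersetCard k with hPdef
  have hPfacts : ∀ AB ∈ P, AB.1 ⊆ calE m i ∧ AB.1.card = r - 1 ∧
      AB.2 ⊆ testS n m ∧ AB.2.card = k ∧
      AB.1 ∪ AB.2 ⊆ Finset.univ.erase (ip m i) ∧ (AB.1 ∪ AB.2).card = r + k - 1 := by
    intro AB hAB
    rw [hPdef, Finset.mem_product, Finset.mem_powersetCard, Finset.mem_powersetCard] at hAB
    obtain ⟨⟨h1, h2⟩, h3, h4⟩ := hAB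
    have hdisjAB : Disjoint AB.1 AB.2 :=
      Finset.disjoint_of_subset_left h1 (Finset.disjoint_of_subset_right h3 (disj_calE_testS i))
    refine ⟨h1, h2, h3, h4, ?_, ?_⟩
    · exact Finset.union_subset (h1.trans (calE_subset i)) (h3.trans (testS_subset i))
    · rw [Finset.card_union_of_disjoint hdisjAB, h2, h4]; omega
  have hrecover : ∀ AB ∈ P, (AB.1 ∪ AB.2) ∩ calE m i = AB.1 ∧
      (AB.1 ∪ AB.2) ∩ testS n m = AB.2 := by
    intro AB hAB
    obtain ⟨h1, _, h3, _, _, _⟩ := hPfacts AB hAB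
    constructor
    · rw [Finset.union_inter_distrib_right, Finset.inter_eq_left.mpr h1,
        Finset.disjoint_iff_inter_eq_empty.mp
          (Finset.disjoint_of_subset_left h3 (disj_calE_testS i).symm), Finset.union_empty]
    · rw [Finset.union_inter_distrib_right, Finset.inter_eq_left.mpr h3,
        Finset.disjoint_iff_inter_eq_empty.mp
          (Finset.disjoint_of_subset_left h1 (disj_calE_testS i)), Finset.empty_union]
  have hAcAt : Ac ∩ At = ⋃ AB ∈ P, Ev (ip m i) (AB.1 ∪ AB.2) := by
    ext y
    simp only [Set.mem_inter_iff, Set.mem_setOf_eq, Set.mem_iUnion, hAcdef, hAtdef]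
    constructor
    · rintro ⟨h1, h2⟩
      rw [Fc_card y i] at h1
      rw [Ft_card y i] at h2
      refine ⟨(blw y (ip m i) ∩ calE m i, blw y (ip m i) ∩ testS n m), ?_, ?_⟩
      · rw [hPdef, Finset.mem_product, Finset.mem_powersetCard, Finset.mem_powersetCard]
        refine ⟨⟨Finset.inter_subset_right, ?_⟩, Finset.inter_subset_right, h2⟩
        show (blw y (ip m i) ∩ calE m i).card = r - 1
        omega
      · show blw y (ip m i) = _
        have hsub : blw y (ip m i) ⊆ calE m i ∪ testS n m := by
          rw [← erase_univ_eq i]; exact blw_subset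
        rw [← Finset.inter_union_distrib_left, Finset.inter_eq_left.mpr hsub]
    · rintro ⟨AB, hAB, hEv⟩
      obtain ⟨_, h2, _, h4, _, _⟩ := hPfacts AB hAB
      obtain ⟨hrec1, hrec2⟩ := hrecover AB hAB
      have hEv' : blw y (ip m i) = AB.1 ∪ AB.2 := hEv
      constructor
      · rw [Fc_card y i, hEv', hrec1, h2]; omega
      · rw [Ft_card y i, hEv', hrec2, h4]
  have hPdisj : (↑P : Set _).PairwiseDisjoint
      (fun AB : Finset (Fin (n + m)) × Finset (Fin (n + m)) => Ev (ip m i) (AB.1 ∪ AB.2)) := by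
    intro x hx x' hx' hne
    refine Set.disjoint_left.mpr fun {y} h1 h2 => hne ?_
    have hu : x.1 ∪ x.2 = x'.1 ∪ x'.2 := by
      have e1 : blw y (ip m i) = x.1 ∪ x.2 := h1
      have e2 : blw y (ip m i) = x'.1 ∪ x'.2 := h2
      rw [← e1, e2]
    obtain ⟨hx1, hx2⟩ := hrecover x (by exact_mod_cast hx)
    obtain ⟨hy1, hy2⟩ := hrecover x' (by exact_mod_cast hx')
    have : x.1 = x'.1 := by rw [← hx1, ← hy1, hu]
    have : x.2 = x'.2 := by rw [← hx2, ← hy2, hu]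
    exact Prod.ext ‹x.1 = x'.1› ‹x.2 = x'.2›
  -- reference set of size r+k-1
  have hScard : r + k - 1 ≤ (Finset.univ.erase (ip m i)).card := by
    rw [Finset.card_erase_of_mem (Finset.mem_univ _), Finset.card_univ, Fintype.card_fin]
    omega
  obtain ⟨S₀, hS₀sub, hS₀card⟩ := Finset.exists_subset_card_eq hScard
  have hjoint : ν (Ac ∩ At) = (P.card : ENNReal) * ν (Ev (ip m i) S₀) := by
    rw [hAcAt, measure_biUnion_finset hPdisj (fun AB _ => measurableSet_Ev _ _)]
    rw [Finset.sum_congr rfl (fun AB hAB => Ev_measure_eq ν hinv hS₀sub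
      (hPfacts AB hAB).2.2.2.2.1 (by rw [(hPfacts AB hAB).2.2.2.2.2, hS₀card]))]
    rw [Finset.sum_const, nsmul_eq_mul]
  have hPcard : P.card = (n - 1).choose (r - 1) * m.choose k := by
    rw [hPdef, Finset.card_product, Finset.card_powersetCard, Finset.card_powersetCard,
      card_calE, card_testS]
  have hkeyJ := key ν hinv hinj (s := r + k - 1) (by omega) hS₀sub hS₀card
  ---- MARGINAL EVENT ----
  set ρ : (Fin (n + m) → ℝ) → (Fin n → ℝ) := fun y => y ∘ Fin.castAdd m with hρdef
  have hρ : Measurable ρ := measurable_pi_lambda _ fun j => measurable_pi_apply _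
  set ν' : Measure (Fin n → ℝ) := ν.map ρ with hν'
  haveI : IsProbabilityMeasure ν' := Measure.isProbabilityMeasure_map hρ.aemeasurable
  have hinv' : ∀ σ : Equiv.Perm (Fin n), Measure.map (fun z => z ∘ σ) ν' = ν' := by
    intro σ
    set π : Equiv.Perm (Fin (n + m)) :=
      finSumFinEquiv.symm.trans ((Equiv.sumCongr σ (Equiv.refl (Fin m))).trans finSumFinEquiv)
      with hπdef
    have hπ : ∀ j : Fin n, π (Fin.castAdd m j) = Fin.castAdd m (σ j) := by
      intro j
      rw [hπdef]
      simp [finSumFinEquiv_symm_apply_castAdd]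
    rw [hν', Measure.map_map (measurable_comp_perm σ) hρ]
    have hcomm : ((fun z : Fin n → ℝ => z ∘ σ) ∘ ρ)
        = (ρ ∘ (fun y : Fin (n + m) → ℝ => y ∘ π)) := by
      funext y
      funext j
      exact congrArg y (hπ j).symm
    rw [hcomm, ← Measure.map_map hρ (measurable_comp_perm π), hinv]
  have hinj' : ∀ᵐ z ∂ν', Function.Injective z := by
    rw [ae_iff]
    have hc : {z : Fin n → ℝ | ¬ Function.Injective z}
        = {z : Fin n → ℝ | Function.Injective z}ᶜ := rfl
    rw [hc, hν', Measure.map_apply hρ measurableSet_inj.compl]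
    refine measure_mono_null ?_ (ae_iff.mp hinj)
    intro y hy
    simp only [Set.mem_preimage, Set.mem_compl_iff, Set.mem_setOf_eq] at hy ⊢
    exact fun hyi => hy (hyi.comp (Fin.castAdd_injective n m))
  have hU : Ac = ρ ⁻¹' (⋃ S ∈ (Finset.univ.erase i).powersetCard (r - 1), Ev i S) := by
    ext y
    simp only [Set.mem_preimage, Set.mem_iUnion, Set.mem_setOf_eq, hAcdef]
    have hfe : (Finset.univ.filter (fun j : Fin n => y (Fin.castAdd m j) ≤ y (ip m i)))
        = (Finset.univ.filter (fun j : Fin n => ρ y j ≤ ρ y i)) := rfl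
    rw [hfe, Fcn_card (ρ y) i]
    constructor
    · intro h
      exact ⟨blw (ρ y) i, Finset.mem_powersetCard.mpr ⟨blw_subset, by omega⟩, rfl⟩
    · rintro ⟨S, hS, hEv⟩
      have : blw (ρ y) i = S := hEv
      rw [this, (Finset.mem_powersetCard.mp hS).2]
      omega
  have hUmeas : MeasurableSet (⋃ S ∈ (Finset.univ.erase i).powersetCard (r - 1),
      Ev (NN := n) i S) :=
    MeasurableSet.biUnion (Finset.countable_toSet _) fun S _ => measurableSet_Ev _ _
  have hAcmeas : MeasurableSet Ac := by rw [hU]; exact hρ hUmeas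
  have hUdisj : (↑((Finset.univ.erase i).powersetCard (r - 1)) : Set _).PairwiseDisjoint
      (fun S => Ev (NN := n) i S) := by
    intro S hS S' hS' hne
    refine Set.disjoint_left.mpr fun {z} h1 h2 => hne ?_
    have e1 : blw z i = S := h1
    have e2 : blw z i = S' := h2
    rw [← e1, e2]
  obtain ⟨S₁, hS₁sub, hS₁card⟩ := Finset.exists_subset_card_eq
    (show r - 1 ≤ (Finset.univ.erase i).card by
      rw [Finset.card_erase_of_mem (Finset.mem_univ _), Finset.card_univ, Fintype.card_fin]
      omega)
  have hmargU : ν Ac = ((n - 1).choose (r - 1) : ENNReal) * ν' (Ev i S₁) := by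
    rw [hU, ← Measure.map_apply hρ hUmeas, ← hν',
      measure_biUnion_finset hUdisj (fun S _ => measurableSet_Ev _ _)]
    rw [Finset.sum_congr rfl (fun S hS => Ev_measure_eq ν' hinv' hS₁sub
      (Finset.mem_powersetCard.mp hS).1
      (by rw [(Finset.mem_powersetCard.mp hS).2, hS₁card]))]
    rw [Finset.sum_const, nsmul_eq_mul, Finset.card_powersetCard,
      Finset.card_erase_of_mem (Finset.mem_univ _), Finset.card_univ, Fintype.card_fin]
  have hkeyM := key ν' hinv' hinj' (s := r - 1) (by omega) hS₁sub hS₁card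
  have hmarg : (n : ENNReal) * ν Ac = 1 := by
    rw [hmargU, ← mul_assoc]
    have hn1 : ((n : ℕ) : ENNReal) * ((n - 1).choose (r - 1) : ENNReal)
        = ((n : ENNReal) * (((n - 1).choose (r - 1) : ℕ) : ENNReal)) := by norm_cast
    rw [← hkeyM]
  ---- ASSEMBLY ----
  have hCmeas : MeasurableSet {ω | Rc ω i = r} := by rw [hC]; exact hY hAcmeas
  have hAcAtmeas : MeasurableSet (Ac ∩ At) := by
    rw [hAcAt]
    exact MeasurableSet.biUnion (Finset.countable_toSet _) fun AB _ => measurableSet_Ev _ _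
  have hμC : μ {ω | Rc ω i = r} = ν Ac := by
    rw [hC, hν, Measure.map_apply hY hAcmeas]
  have hμCT : μ ({ω | Rc ω i = r} ∩ {ω | Rt ω i = k}) = ν (Ac ∩ At) := by
    rw [hCT, hν, Measure.map_apply hY hAcAtmeas]
  rw [cond_apply hCmeas, hμC, hμCT]
  have hinvC : (ν Ac)⁻¹ = (n : ENNReal) :=
    (ENNReal.eq_inv_of_mul_eq_one_left hmarg).symm
  rw [hinvC, hjoint, hPcard]
  -- value of p₀
  have hp₀ : ν (Ev (ip m i) S₀)
      = (((n + m) * (n + m - 1).choose (r + k - 1) : ℕ) : ENNReal)⁻¹ := by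
    apply ENNReal.eq_inv_of_mul_eq_one_left
    rw [Nat.cast_mul, mul_comm]
    exact hkeyJ
  rw [hp₀]
  -- now pure ENNReal arithmetic with one ℕ identity
  have hnat : n * ((n - 1).choose (r - 1) * m.choose k) * ((n + m).choose m)
      = ((r + k - 1).choose k * ((n + m) - r - k).choose (m - k))
        * ((n + m) * ((n + m - 1).choose (r + k - 1))) := by
    obtain ⟨a, rfl⟩ : ∃ a, r = a + 1 := ⟨r - 1, by omega⟩
    obtain ⟨b, rfl⟩ : ∃ b, n = a + b + 1 := ⟨n - (a + 1), by omega⟩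
    obtain ⟨d, rfl⟩ : ∃ d, m = k + d := ⟨m - k, by omega⟩
    exact natid a b k d
  have hX0 : (((n + m) * (n + m - 1).choose (r + k - 1) : ℕ) : ENNReal) ≠ 0 := by
    rw [Nat.cast_ne_zero]
    have := Nat.choose_pos (show r + k - 1 ≤ n + m - 1 by omega)
    positivity
  have hXt : (((n + m) * (n + m - 1).choose (r + k - 1) : ℕ) : ENNReal) ≠ ⊤ :=
    ENNReal.natCast_ne_top _
  have hD0 : (((n + m).choose m : ℕ) : ENNReal) ≠ 0 := by
    rw [Nat.cast_ne_zero]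
    exact (Nat.choose_pos (by omega)).ne'
  have hDt : (((n + m).choose m : ℕ) : ENNReal) ≠ ⊤ := ENNReal.natCast_ne_top _
  rw [ENNReal.eq_div_iff hD0 hDt]
  have hL : (((n + m).choose m : ℕ) : ENNReal)
        * ((n : ENNReal) * ((((n - 1).choose (r - 1) * m.choose k : ℕ) : ENNReal)
          * (((n + m) * (n + m - 1).choose (r + k - 1) : ℕ) : ENNReal)⁻¹))
      = ((n * ((n - 1).choose (r - 1) * m.choose k) * ((n + m).choose m) : ℕ) : ENNReal)
        / (((n + m) * (n + m - 1).choose (r + k - 1) : ℕ) : ENNReal) := by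
    rw [div_eq_mul_inv]
    push_cast
    ring
  rw [hL]
  have hcast : ((n * ((n - 1).choose (r - 1) * m.choose k) * ((n + m).choose m) : ℕ) : ENNReal)
      = (((r + k - 1).choose k : ENNReal) * (((n + m) - r - k).choose (m - k) : ENNReal))
        * (((n + m) * (n + m - 1).choose (r + k - 1) : ℕ) : ENNReal) := by
    exact_mod_cast hnat
  rw [hcast, mul_div_assoc, ENNReal.div_self hX0 hXt, mul_one]
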